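/- arXiv:2405.04202 — 2 statements merged into one kernel-verified Lean document; each statement's English description precedes it below -/
import Mathlib

section
/- Let E be a real Banach space and let μ, ν be Radon probability measures on B_{E*} (with the weak* topology) having the same barycenter x₀*, and assume ‖x₀*‖ = 1. If ∫ p dμ ≤ ∫ p dν for every weak* continuous sublinear function p : E* → ℝ, then μ ≺ ν in the Choquet order, i.e. ∫ k dμ ≤ ∫ k dν for every weak* continuous convex function k : B_{E*} → ℝ. -/
open MeasureTheory
open scoped ENNReal

noncomputable section

/-- The closed unit ball of the dual of a real Banach space `E`, equipped with the weak*
topology. -/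
abbrev DualBall (E : Type*) [NormedAddCommGroup E] [NormedSpace ℝ E] :=
  {φ : WeakDual ℝ E // ‖WeakDual.toStrongDual φ‖ ≤ 1}

/-- The Borel σ-algebra on `B_{E*}`. -/
instance ballBorelMeasurableSpace (E : Type*) [NormedAddCommGroup E] [NormedSpace ℝ E] :
    MeasurableSpace (DualBall E) := borel _

instance (E : Type*) [NormedAddCommGroup E] [NormedSpace ℝ E] :
    BorelSpace (DualBall E) := ⟨rfl⟩

namespace ChoquetAux

variable {E : Type*} [NormedAddCommGroup E] [NormedSpace ℝ E]

instance : LocallyConvexSpace ℝ (WeakDual ℝ E) :=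
  WeakBilin.locallyConvexSpace (B := topDualPairing ℝ E)

lemma ballSet_eq :
    {φ : WeakDual ℝ E | ‖WeakDual.toStrongDual φ‖ ≤ 1} =
      WeakDual.toStrongDual ⁻¹' Metric.closedBall 0 1 := by
  ext φ
  simp [Metric.mem_closedBall, dist_zero_right]

lemma isCompact_ballSet :
    IsCompact {φ : WeakDual ℝ E | ‖WeakDual.toStrongDual φ‖ ≤ 1} := by
  rw [ballSet_eq]; exact WeakDual.isCompact_closedBall 0 1

lemma isClosed_ballSet :
    IsClosed {φ : WeakDual ℝ E | ‖WeakDual.toStrongDual φ‖ ≤ 1} := by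
  rw [ballSet_eq]; exact WeakDual.isClosed_closedBall 0 1

instance : CompactSpace (DualBall E) :=
  isCompact_iff_compactSpace.mp isCompact_ballSet

lemma convex_ballSet :
    Convex ℝ {φ : WeakDual ℝ E | ‖WeakDual.toStrongDual φ‖ ≤ 1} := by
  intro φ hφ ψ hψ a b ha hb hab
  simp only [Set.mem_setOf_eq] at *
  have : WeakDual.toStrongDual (a • φ + b • ψ)
      = a • WeakDual.toStrongDual φ + b • WeakDual.toStrongDual ψ := by
    simp [map_add, _root_.map_smul]
  rw [this]
  calc ‖a • WeakDual.toStrongDual φ + b • WeakDual.toStrongDual ψ‖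
      ≤ ‖a • WeakDual.toStrongDual φ‖ + ‖b • WeakDual.toStrongDual ψ‖ := norm_add_le _ _
    _ = |a| * ‖WeakDual.toStrongDual φ‖ + |b| * ‖WeakDual.toStrongDual ψ‖ := by
        rw [norm_smul, norm_smul]; simp [Real.norm_eq_abs]
    _ ≤ a * 1 + b * 1 := by
        rw [abs_of_nonneg ha, abs_of_nonneg hb]
        gcongr
    _ = 1 := by linarith

set_option maxHeartbeats 1000000 in
/-- Key approximation lemma: a continuous convex function on the dual ball is approximated
from below, within `ε`, by a finite max of weak*-continuous affine functions. -/
lemma exists_affine_family (k : DualBall E → ℝ) (hk : Continuous k)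
    (hconv : ∀ (φ ψ ξ : DualBall E) (a b : ℝ), 0 ≤ a → 0 ≤ b → a + b = 1 →
        (ξ.1 : WeakDual ℝ E) = a • φ.1 + b • ψ.1 → k ξ ≤ a * k φ + b * k ψ)
    {ε : ℝ} (hε : 0 < ε) :
    ∃ (G : DualBall E → (WeakDual ℝ E →L[ℝ] ℝ)) (c : DualBall E → ℝ)
      (t : Finset (DualBall E)), t.Nonempty ∧
      (∀ ψ ∈ t, ∀ φ : DualBall E, G ψ φ.1 + c ψ ≤ k φ) ∧
      (∀ φ : DualBall E, ∃ ψ ∈ t, k φ - ε < G ψ φ.1 + c ψ) := by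
  classical
  set S : Set (WeakDual ℝ E × ℝ) :=
    {q | ∃ hq : ‖WeakDual.toStrongDual q.1‖ ≤ 1, k ⟨q.1, hq⟩ ≤ q.2} with hS
  have hSimage : S = (Prod.map (Subtype.val : DualBall E → WeakDual ℝ E) (id : ℝ → ℝ)) ''
      {x : DualBall E × ℝ | k x.1 ≤ x.2} := by
    ext q
    constructor
    · rintro ⟨hq, hle⟩
      exact ⟨⟨⟨q.1, hq⟩, q.2⟩, hle, rfl⟩
    · rintro ⟨⟨φ, s⟩, hle, rfl⟩
      exact ⟨φ.2, hle⟩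
  have hSclosed : IsClosed S := by
    rw [hSimage]
    have hproper : IsProperMap (Subtype.val : DualBall E → WeakDual ℝ E) :=
      continuous_subtype_val.isProperMap
    exact (hproper.universally_closed ℝ) _
      (isClosed_le (hk.comp continuous_fst) continuous_snd)
  have hSconvex : Convex ℝ S := by
    rintro q1 ⟨h1, hk1⟩ q2 ⟨h2, hk2⟩ a b ha hb hab
    have hm : ‖WeakDual.toStrongDual (a • q1.1 + b • q2.1)‖ ≤ 1 :=
      convex_ballSet h1 h2 ha hb hab
    have hfst : (a • q1 + b • q2).1 = a • q1.1 + b • q2.1 := rfl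
    have hsnd : (a • q1 + b • q2).2 = a * q1.2 + b * q2.2 := rfl
    refine ⟨hfst ▸ hm, ?_⟩
    have hkle : k ⟨(a • q1 + b • q2).1, hfst ▸ hm⟩ ≤ a * k ⟨q1.1, h1⟩ + b * k ⟨q2.1, h2⟩ :=
      hconv ⟨q1.1, h1⟩ ⟨q2.1, h2⟩ _ a b ha hb hab hfst
    have h1' : a * k ⟨q1.1, h1⟩ ≤ a * q1.2 := by nlinarith
    have h2' : b * k ⟨q2.1, h2⟩ ≤ b * q2.2 := by nlinarith
    rw [hsnd]
    linarith
  -- For every point of the ball, construct a supporting affine function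
  have key : ∀ ψ : DualBall E, ∃ (g : WeakDual ℝ E →L[ℝ] ℝ) (c : ℝ),
      (∀ φ : DualBall E, g φ.1 + c ≤ k φ) ∧ k ψ - ε < g ψ.1 + c := by
    intro ψ
    have hnot : ((ψ.1 : WeakDual ℝ E), k ψ - ε) ∉ S := by
      rintro ⟨hq, hle⟩
      have hψeq : (⟨ψ.1, hq⟩ : DualBall E) = ψ := Subtype.ext rfl
      rw [hψeq] at hle
      simp only at hle
      linarith
    obtain ⟨f, u, hfx, hfS⟩ := geometric_hahn_banach_point_closed hSconvex hSclosed hnot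
    set c0 : ℝ := f ((0 : WeakDual ℝ E), (1 : ℝ)) with hc0def
    have hsplit : ∀ (φ : WeakDual ℝ E) (s : ℝ), f (φ, s) = f (φ, 0) + s * c0 := by
      intro φ s
      have hdecomp : ((φ, s) : WeakDual ℝ E × ℝ)
          = (φ, (0 : ℝ)) + s • ((0 : WeakDual ℝ E), (1 : ℝ)) := by
        ext
        · simp
        · simp
      rw [hdecomp, map_add, f.map_smul, smul_eq_mul]
    have hmemS : ∀ φ : DualBall E, ((φ.1 : WeakDual ℝ E), k φ) ∈ S := fun φ => ⟨φ.2, le_refl _⟩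
    have hc0 : 0 < c0 := by
      have h1 : u < f (ψ.1, k ψ) := hfS _ (hmemS ψ)
      have h2 : f (ψ.1, k ψ - ε) < u := hfx
      rw [hsplit] at h1 h2
      nlinarith
    refine ⟨-((c0⁻¹ : ℝ) • (f.comp (ContinuousLinearMap.inl ℝ (WeakDual ℝ E) ℝ))), u / c0, ?_, ?_⟩
    · intro φ
      have h1 : u < f (φ.1, k φ) := hfS _ (hmemS φ)
      rw [hsplit] at h1
      have hgoal : (u - f (φ.1, 0)) / c0 ≤ k φ := by
        rw [div_le_iff₀ hc0]; linarith
      simp only [ContinuousLinearMap.neg_apply, ContinuousLinearMap.coe_smul',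
        ContinuousLinearMap.smul_apply, ContinuousLinearMap.comp_apply,
        ContinuousLinearMap.inl_apply, Pi.smul_apply, smul_eq_mul]
      have heq : -(c0⁻¹ * f (φ.1, 0)) + u / c0 = (u - f (φ.1, 0)) / c0 := by
        field_simp
        ring
      linarith [heq, hgoal]
    · have h2 : f (ψ.1, k ψ - ε) < u := hfx
      rw [hsplit] at h2
      have hgoal : k ψ - ε < (u - f (ψ.1, 0)) / c0 := by
        rw [lt_div_iff₀ hc0]; linarith
      simp only [ContinuousLinearMap.neg_apply, ContinuousLinearMap.coe_smul',
        ContinuousLinearMap.smul_apply, ContinuousLinearMap.comp_apply,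
        ContinuousLinearMap.inl_apply, Pi.smul_apply, smul_eq_mul]
      have heq : -(c0⁻¹ * f (ψ.1, 0)) + u / c0 = (u - f (ψ.1, 0)) / c0 := by
        field_simp
        ring
      linarith [heq, hgoal]
  choose G c hle hgt using key
  -- Extract a finite subcover
  set U : DualBall E → Set (DualBall E) := fun ψ => {φ | k φ - ε < G ψ φ.1 + c ψ} with hU
  have hUopen : ∀ ψ, IsOpen (U ψ) := by
    intro ψ
    exact isOpen_lt (hk.sub continuous_const)
      (((G ψ).continuous.comp continuous_subtype_val).add continuous_const)
  obtain ⟨t, htcover⟩ := isCompact_univ.elim_finite_subcover U hUopen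
    (fun φ _ => Set.mem_iUnion.mpr ⟨φ, hgt φ⟩)
  have hzero : (⟨0, by simp⟩ : DualBall E) ∈ ⋃ ψ ∈ t, U ψ := htcover (Set.mem_univ _)
  obtain ⟨ψ₀, hψ₀t, -⟩ := Set.mem_iUnion₂.mp hzero
  refine ⟨G, c, t, ⟨ψ₀, hψ₀t⟩, fun ψ _ φ => hle ψ φ, fun φ => ?_⟩
  obtain ⟨ψ, hψt, hψ⟩ := Set.mem_iUnion₂.mp (htcover (Set.mem_univ φ))
  exact ⟨ψ, hψt, hψ⟩

end ChoquetAux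

set_option maxHeartbeats 2000000 in
/-- Let `μ, ν` be Radon probability measures on `B_{E*}` with the same
barycenter `x₀*` of norm one.  If `∫ p dμ ≤ ∫ p dν` for every weak* continuous sublinear
`p : E* → ℝ`, then `μ ≺ ν` in the Choquet order: `∫ k dμ ≤ ∫ k dν` for every weak* continuous
convex `k : B_{E*} → ℝ`. -/
theorem choquet_le_of_sublinear_test
    (E : Type*) [NormedAddCommGroup E] [NormedSpace ℝ E] [CompleteSpace E]
    (μ ν : Measure (DualBall E)) [IsProbabilityMeasure μ] [IsProbabilityMeasure ν]
    [μ.Regular] [ν.Regular]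
    (x₀ : WeakDual ℝ E) (hx₀ : ‖WeakDual.toStrongDual x₀‖ = 1)
    (hbaryμ : ∀ x : E, x₀ x = ∫ φ, (φ : DualBall E).1 x ∂μ)
    (hbaryν : ∀ x : E, x₀ x = ∫ φ, (φ : DualBall E).1 x ∂ν)
    (hsub : ∀ p : WeakDual ℝ E → ℝ, Continuous p →
      (∀ c : ℝ, 0 ≤ c → ∀ φ : WeakDual ℝ E, p (c • φ) = c * p φ) →
      (∀ φ ψ : WeakDual ℝ E, p (φ + ψ) ≤ p φ + p ψ) →
      ∫ φ, p (φ : DualBall E).1 ∂μ ≤ ∫ φ, p (φ : DualBall E).1 ∂ν) :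
    ∀ k : DualBall E → ℝ, Continuous k →
      (∀ (φ ψ ξ : DualBall E) (a b : ℝ), 0 ≤ a → 0 ≤ b → a + b = 1 →
        (ξ.1 : WeakDual ℝ E) = a • φ.1 + b • ψ.1 →
        k ξ ≤ a * k φ + b * k ψ) →
      ∫ φ, k φ ∂μ ≤ ∫ φ, k φ ∂ν := by
  classical
  intro k hk hconv
  -- it suffices to prove the inequality up to an arbitrary ε > 0
  by_contra hcon
  push_neg at hcon
  set ε : ℝ := (∫ φ, k φ ∂μ - ∫ φ, k φ ∂ν) / 2 with hεdef
  have hε : 0 < ε := by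
    simp only [hεdef]
    linarith
  suffices hmain : ∫ φ, k φ ∂μ ≤ ∫ φ, k φ ∂ν + ε by
    simp only [hεdef] at hmain
    linarith
  -- obtain the affine family approximating k within ε/3
  obtain ⟨G, c, t, htne, hle, hgt⟩ :=
    ChoquetAux.exists_affine_family k hk hconv (show (0:ℝ) < ε / 3 by linarith)
  set C : ℝ := t.sup' htne fun ψ => |c ψ| with hCdef
  have hCb : ∀ ψ ∈ t, |c ψ| ≤ C := fun ψ hψ => Finset.le_sup' (fun ψ => |c ψ|) hψ
  have hC0 : 0 ≤ C :=
    le_trans (abs_nonneg _) (hCb htne.choose htne.choose_spec)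
  set δ : ℝ := ε / (3 * (C + 1)) with hδdef
  have hδ : 0 < δ := by positivity
  have hCδ : C * δ ≤ ε / 3 := by
    have h1 : C * δ ≤ (C + 1) * δ := by nlinarith
    have h2 : (C + 1) * δ = ε / 3 := by
      rw [hδdef]
      field_simp
    linarith
  -- choose a direction u almost attaining the norm of the barycenter
  have h1δ : 1 - δ < ‖WeakDual.toStrongDual x₀‖ := by rw [hx₀]; linarith
  obtain ⟨x, hx1, hx2⟩ := ContinuousLinearMap.exists_lt_apply_of_lt_opNorm
    (WeakDual.toStrongDual x₀) h1δ
  have hx2' : 1 - δ < |x₀ x| := by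
    rwa [WeakDual.toStrongDual_apply, Real.norm_eq_abs] at hx2
  set u : E := if 0 ≤ x₀ x then x else -x with hudef
  have hu1 : ‖u‖ ≤ 1 := by
    rw [hudef]
    split_ifs
    · exact hx1.le
    · rw [norm_neg]; exact hx1.le
  have hu2 : 1 - δ < x₀ u := by
    rw [hudef]
    rcases le_or_gt 0 (x₀ x) with h | h
    · rw [if_pos h]
      rwa [abs_of_nonneg h] at hx2'
    · rw [if_neg (not_le.mpr h), map_neg]
      rwa [abs_of_neg h] at hx2'
  -- the sublinear majorant
  set p : WeakDual ℝ E → ℝ := fun w => t.sup' htne fun ψ => G ψ w + c ψ * w u with hpdef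
  have hpcont : Continuous p :=
    Continuous.finset_sup'_apply htne fun ψ _ =>
      ((G ψ).continuous).add (continuous_const.mul (WeakDual.eval_continuous u))
  have hphom : ∀ a : ℝ, 0 ≤ a → ∀ w : WeakDual ℝ E, p (a • w) = a * p w := by
    intro a ha w
    have hterm : ∀ ψ : DualBall E, G ψ (a • w) + c ψ * (a • w) u
        = a * (G ψ w + c ψ * w u) := by
      intro ψ
      have h1 : G ψ (a • w) = a * G ψ w := by
        rw [ContinuousLinearMap.map_smul, smul_eq_mul]
      have h2 : (a • w) u = a * w u := rfl
      rw [h1, h2]; ring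
    calc p (a • w) = t.sup' htne fun ψ => a * (G ψ w + c ψ * w u) := by
          rw [hpdef]; exact Finset.sup'_congr htne rfl fun ψ _ => hterm ψ
      _ = a * p w := by
          rw [hpdef]
          rw [Finset.comp_sup'_eq_sup'_comp htne (fun y : ℝ => a * y)
            (fun x y => by
              rcases le_total x y with h | h
              · rw [max_eq_right h,
                  max_eq_right (by nlinarith : a * x ≤ a * y)]
              · rw [max_eq_left h,
                  max_eq_left (by nlinarith : a * y ≤ a * x)])]
          rfl
  have hpsub : ∀ w₁ w₂ : WeakDual ℝ E, p (w₁ + w₂) ≤ p w₁ + p w₂ := by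
    intro w₁ w₂
    rw [hpdef]
    refine Finset.sup'_le htne _ fun ψ hψ => ?_
    have h1 : G ψ (w₁ + w₂) = G ψ w₁ + G ψ w₂ := map_add _ _ _
    have h2 : (w₁ + w₂) u = w₁ u + w₂ u := rfl
    have hA : G ψ w₁ + c ψ * w₁ u ≤ p w₁ := Finset.le_sup' (fun ψ => G ψ w₁ + c ψ * w₁ u) hψ
    have hB : G ψ w₂ + c ψ * w₂ u ≤ p w₂ := Finset.le_sup' (fun ψ => G ψ w₂ + c ψ * w₂ u) hψ
    rw [h1, h2]
    calc G ψ w₁ + G ψ w₂ + c ψ * (w₁ u + w₂ u)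
        = (G ψ w₁ + c ψ * w₁ u) + (G ψ w₂ + c ψ * w₂ u) := by ring
      _ ≤ p w₁ + p w₂ := add_le_add hA hB
  -- the affine max on the ball
  set h : DualBall E → ℝ := fun φ => t.sup' htne fun ψ => G ψ φ.1 + c ψ with hhdef
  have hhcont : Continuous h :=
    Continuous.finset_sup'_apply htne fun ψ _ =>
      ((G ψ).continuous.comp continuous_subtype_val).add continuous_const
  -- pointwise inequalities
  have hkh : ∀ φ : DualBall E, k φ ≤ h φ + ε / 3 := by
    intro φ
    obtain ⟨ψ, hψt, hψ⟩ := hgt φ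
    have := Finset.le_sup' (fun ψ => G ψ φ.1 + c ψ) hψt
    simp only [hhdef]
    linarith
  have hhk : ∀ φ : DualBall E, h φ ≤ k φ := fun φ =>
    Finset.sup'_le htne _ fun ψ hψ => hle ψ hψ φ
  have hφu : ∀ φ : DualBall E, |φ.1 u| ≤ 1 := by
    intro φ
    have h1 : ‖(WeakDual.toStrongDual φ.1) u‖ ≤ ‖WeakDual.toStrongDual φ.1‖ * ‖u‖ :=
      ContinuousLinearMap.le_opNorm _ _
    rw [WeakDual.toStrongDual_apply, Real.norm_eq_abs] at h1
    have h2 : ‖WeakDual.toStrongDual φ.1‖ * ‖u‖ ≤ 1 := by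
      have := φ.2
      nlinarith [norm_nonneg (WeakDual.toStrongDual φ.1), norm_nonneg u]
    linarith
  have hφu' : ∀ φ : DualBall E, 0 ≤ 1 - φ.1 u := by
    intro φ
    have := hφu φ
    have := abs_le.mp this
    linarith
  have hterm_bound : ∀ φ : DualBall E, ∀ ψ ∈ t,
      |c ψ * (1 - φ.1 u)| ≤ C * (1 - φ.1 u) := by
    intro φ ψ hψ
    rw [abs_mul, abs_of_nonneg (hφu' φ)]
    exact mul_le_mul_of_nonneg_right (hCb ψ hψ) (hφu' φ)
  have hhp : ∀ φ : DualBall E, h φ ≤ p φ.1 + C * (1 - φ.1 u) := by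
    intro φ
    refine Finset.sup'_le htne _ fun ψ hψ => ?_
    have hb := hterm_bound φ ψ hψ
    have habs := abs_le.mp hb
    have hA : G ψ φ.1 + c ψ * φ.1 u ≤ p φ.1 :=
      Finset.le_sup' (fun ψ => G ψ φ.1 + c ψ * φ.1 u) hψ
    have : G ψ φ.1 + c ψ = (G ψ φ.1 + c ψ * φ.1 u) + c ψ * (1 - φ.1 u) := by ring
    linarith
  have hph : ∀ φ : DualBall E, p φ.1 ≤ h φ + C * (1 - φ.1 u) := by
    intro φ
    refine Finset.sup'_le htne _ fun ψ hψ => ?_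
    have hb := hterm_bound φ ψ hψ
    have habs := abs_le.mp hb
    have hA : G ψ φ.1 + c ψ ≤ h φ := Finset.le_sup' (fun ψ => G ψ φ.1 + c ψ) hψ
    have : G ψ φ.1 + c ψ * φ.1 u = (G ψ φ.1 + c ψ) - c ψ * (1 - φ.1 u) := by ring
    linarith
  -- integrability
  have hku : Continuous fun φ : DualBall E => φ.1 u :=
    (WeakDual.eval_continuous u).comp continuous_subtype_val
  have intk : ∀ ρ : Measure (DualBall E), IsProbabilityMeasure ρ → Integrable k ρ := by
    intro ρ _
    exact hk.integrable_of_hasCompactSupport (HasCompactSupport.of_compactSpace k)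
  have inth : ∀ ρ : Measure (DualBall E), IsProbabilityMeasure ρ → Integrable h ρ := by
    intro ρ _
    exact hhcont.integrable_of_hasCompactSupport (HasCompactSupport.of_compactSpace h)
  have intp : ∀ ρ : Measure (DualBall E), IsProbabilityMeasure ρ →
      Integrable (fun φ : DualBall E => p φ.1) ρ := by
    intro ρ _
    exact (hpcont.comp continuous_subtype_val).integrable_of_hasCompactSupport
      (HasCompactSupport.of_compactSpace _)
  have intu : ∀ ρ : Measure (DualBall E), IsProbabilityMeasure ρ →
      Integrable (fun φ : DualBall E => C * (1 - φ.1 u)) ρ := by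
    intro ρ _
    exact (continuous_const.mul (continuous_const.sub hku)).integrable_of_hasCompactSupport
      (HasCompactSupport.of_compactSpace _)
  -- the value of ∫ C * (1 - φ u)
  have hCint : ∀ (ρ : Measure (DualBall E)), IsProbabilityMeasure ρ →
      (x₀ u = ∫ φ, (φ : DualBall E).1 u ∂ρ) →
      ∫ φ, C * (1 - φ.1 u) ∂ρ ≤ C * δ := by
    intro ρ hρ hbary
    have hintu : Integrable (fun φ : DualBall E => φ.1 u) ρ :=
      hku.integrable_of_hasCompactSupport (HasCompactSupport.of_compactSpace _)
    have : ∫ φ, C * (1 - φ.1 u) ∂ρ = C * (1 - x₀ u) := by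
      rw [integral_const_mul, integral_sub (integrable_const 1) hintu, integral_const]
      simp [measure_univ, hbary]
    rw [this]
    have : 1 - x₀ u ≤ δ := by linarith
    nlinarith
  -- chain of inequalities
  have I1 : ∫ φ, k φ ∂μ ≤ ∫ φ, h φ ∂μ + ε / 3 := by
    have hint2 : Integrable (fun φ : DualBall E => h φ + ε / 3) μ :=
      (inth μ inferInstance).add (integrable_const (ε / 3))
    have := integral_mono (intk μ inferInstance) hint2 hkh
    rwa [integral_add (inth μ inferInstance) (integrable_const _), integral_const,
      probReal_univ, one_smul] at this
  have I2 : ∫ φ, h φ ∂μ ≤ (∫ φ, p φ.1 ∂μ) + C * δ := by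
    have hint2 : Integrable (fun φ : DualBall E => p φ.1 + C * (1 - φ.1 u)) μ :=
      (intp μ inferInstance).add (intu μ inferInstance)
    have h1 := integral_mono (inth μ inferInstance) hint2 hhp
    rw [integral_add (intp μ inferInstance) (intu μ inferInstance)] at h1
    have h2 := hCint μ inferInstance (hbaryμ u)
    linarith
  have I3 : ∫ φ, p φ.1 ∂μ ≤ ∫ φ, p φ.1 ∂ν := hsub p hpcont hphom hpsub
  have I4 : ∫ φ, p φ.1 ∂ν ≤ (∫ φ, h φ ∂ν) + C * δ := by
    have hint2 : Integrable (fun φ : DualBall E => h φ + C * (1 - φ.1 u)) ν :=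
      (inth ν inferInstance).add (intu ν inferInstance)
    have h1 := integral_mono (intp ν inferInstance) hint2 hph
    rw [integral_add (inth ν inferInstance) (intu ν inferInstance)] at h1
    have h2 := hCint ν inferInstance (hbaryν u)
    linarith
  have I5 : ∫ φ, h φ ∂ν ≤ ∫ φ, k φ ∂ν :=
    integral_mono (inth ν inferInstance) (intk ν inferInstance) hhk
  linarith
end
end

section
/- Let E be a real Banach space and let μ be a Radon probability measure on B_{E*} (with the weak* topology) whose barycenter lies on the unit sphere S_{E*}. Then for every ε > 0 there exists a weak* compact convex set C ⊆ S_{E*} with μ(C) > 1 − ε. -/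
open MeasureTheory
open scoped ENNReal

noncomputable section

/-- If `μ` is a Radon probability measure on `B_{E*}` whose barycenter lies
on the unit sphere, then for every `ε > 0` there is a weak* compact convex set `C ⊆ S_{E*}`
with `μ(C) > 1 - ε`. -/
theorem exists_compact_convex_subset_of_sphere_of_large_measure
    (E : Type*) [NormedAddCommGroup E] [NormedSpace ℝ E] [CompleteSpace E]
    (μ : Measure (DualBall E)) [IsProbabilityMeasure μ] [μ.Regular]
    (x₀ : WeakDual ℝ E) (hx₀ : ‖WeakDual.toStrongDual x₀‖ = 1)
    (hbary : ∀ x : E, x₀ x = ∫ φ, (φ : DualBall E).1 x ∂μ)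
    (ε : ℝ) (hε : 0 < ε) :
    ∃ C : Set (DualBall E), IsCompact C ∧
      (∀ φ ∈ C, ‖WeakDual.toStrongDual (φ : DualBall E).1‖ = 1) ∧
      (∀ φ ∈ C, ∀ ψ ∈ C, ∀ (ξ : DualBall E) (a b : ℝ), 0 ≤ a → 0 ≤ b → a + b = 1 →
        (ξ.1 : WeakDual ℝ E) = a • (φ : DualBall E).1 + b • (ψ : DualBall E).1 → ξ ∈ C) ∧
      1 - ε < (μ C).toReal := by
  classical
  -- The ball is compact (Banach–Alaoglu)
  have hball : IsCompact {φ : WeakDual ℝ E | ‖WeakDual.toStrongDual φ‖ ≤ 1} := by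
    have := WeakDual.isCompact_closedBall (𝕜 := ℝ) (E := E) 0 1
    convert this using 1
    ext φ
    simp [Metric.mem_closedBall, dist_zero_right]
  have hcs : CompactSpace (DualBall E) := isCompact_iff_compactSpace.mp hball
  -- evaluation maps are continuous on the ball
  have hcont : ∀ x : E, Continuous (fun φ : DualBall E => (φ : DualBall E).1 x) := fun x =>
    (WeakDual.eval_continuous x).comp continuous_subtype_val
  -- pointwise bound: |φ x| ≤ ‖x‖
  have hbound : ∀ (φ : DualBall E) (x : E), |(φ : DualBall E).1 x| ≤ ‖x‖ := by
    intro φ x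
    have h1 : |(φ : DualBall E).1 x| ≤ ‖WeakDual.toStrongDual φ.1‖ * ‖x‖ := by
      simpa [Real.norm_eq_abs] using (WeakDual.toStrongDual φ.1).le_opNorm x
    calc |(φ : DualBall E).1 x| ≤ ‖WeakDual.toStrongDual φ.1‖ * ‖x‖ := h1
      _ ≤ 1 * ‖x‖ := by
          exact mul_le_mul_of_nonneg_right φ.2 (norm_nonneg x)
      _ = ‖x‖ := one_mul _
  -- integrability of evaluation maps
  have hint : ∀ x : E, Integrable (fun φ : DualBall E => (φ : DualBall E).1 x) μ := by
    intro x
    exact (hcont x).integrable_of_hasCompactSupport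
      (HasCompactSupport.of_compactSpace _)
  -- choose the δ sequence
  set δ : ℕ → ℝ := fun k => (ε / 4) * (1 / 2) ^ k / (k + 1) with hδdef
  have hδpos : ∀ k, 0 < δ k := by
    intro k
    apply div_pos
    · positivity
    · positivity
  -- choose points x_k with ‖x_k‖ ≤ 1 and x₀ (x k) > 1 - δ k
  have hxk : ∀ k : ℕ, ∃ y : E, ‖y‖ ≤ 1 ∧ 1 - δ k < x₀ y := by
    intro k
    have hlt : 1 - δ k < ‖WeakDual.toStrongDual x₀‖ := by
      rw [hx₀]; linarith [hδpos k]
    obtain ⟨y, hy1, hy2⟩ :=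
      (WeakDual.toStrongDual x₀).exists_lt_apply_of_lt_opNorm hlt
    rw [Real.norm_eq_abs] at hy2
    rcases le_or_gt 0 ((WeakDual.toStrongDual x₀) y) with h | h
    · exact ⟨y, hy1.le, by rwa [abs_of_nonneg h] at hy2⟩
    · refine ⟨-y, by simpa using hy1.le, ?_⟩
      have := abs_of_neg h
      have hx : x₀ (-y) = -((WeakDual.toStrongDual x₀) y) := by
        simp [map_neg]
      rw [hx]
      linarith [hy2, this.symm.trans_le (le_refl _)] <;> linarith
  choose x hx1 hx2 using hxk
  -- the sets C_k and C
  set Ck : ℕ → Set (DualBall E) :=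
    fun k => {φ : DualBall E | 1 - 1 / (k + 1) ≤ (φ : DualBall E).1 (x k)} with hCk
  set C : Set (DualBall E) := ⋂ k, Ck k with hC
  have hCkclosed : ∀ k, IsClosed (Ck k) := fun k =>
    isClosed_le continuous_const (hcont (x k))
  have hCclosed : IsClosed C := isClosed_iInter hCkclosed
  -- Markov bound on the complements
  have hmarkov : ∀ k : ℕ, μ ((Ck k)ᶜ) ≤ ENNReal.ofReal ((ε / 4) * (1 / 2) ^ k) := by
    intro k
    have hkpos : (0:ℝ) < 1 / (k + 1) := by positivity
    set f : DualBall E → ℝ := fun φ => 1 - (φ : DualBall E).1 (x k) with hf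
    have hfnonneg : 0 ≤ᵐ[μ] f := by
      refine Filter.Eventually.of_forall (fun φ => ?_)
      have := hbound φ (x k)
      have h1 : (φ : DualBall E).1 (x k) ≤ 1 :=
        le_trans (le_abs_self _) (le_trans this (hx1 k))
      simp [hf]; linarith
    have hfint : Integrable f μ := (integrable_const 1).sub (hint (x k))
    have hmk := mul_meas_ge_le_integral_of_nonneg hfnonneg hfint (1 / (k + 1))
    have hfI : ∫ φ, f φ ∂μ = 1 - x₀ (x k) := by
      rw [hf]
      rw [integral_sub (integrable_const 1) (hint (x k))]
      simp [hbary (x k), measure_univ]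
    have hlt : ∫ φ, f φ ∂μ < δ k := by
      rw [hfI]; linarith [hx2 k]
    have hsub : (Ck k)ᶜ ⊆ {φ : DualBall E | 1 / (k + 1) ≤ f φ} := by
      intro φ hφ
      simp only [hCk, Set.mem_compl_iff, Set.mem_setOf_eq, not_le] at hφ
      simp only [Set.mem_setOf_eq, hf]
      linarith
    have hmono := measure_mono (μ := μ) hsub
    have hfin : μ {φ : DualBall E | 1 / (k + 1) ≤ f φ} ≠ ⊤ := measure_ne_top μ _
    have htr : (μ {φ : DualBall E | 1 / (k + 1) ≤ f φ}).toReal ≤ (ε / 4) * (1 / 2) ^ k := by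
      have h2 : (1 / (k + 1 : ℝ)) * (μ {φ : DualBall E | 1 / (k + 1) ≤ f φ}).toReal < δ k :=
        lt_of_le_of_lt hmk hlt
      have hk1 : (0:ℝ) < (k:ℝ) + 1 := by positivity
      have h3 : (μ {φ : DualBall E | 1 / (k + 1) ≤ f φ}).toReal < δ k * (k + 1) := by
        rw [one_div, inv_mul_eq_div, div_lt_iff₀ hk1] at h2
        simpa [one_div] using h2
      have hδk : δ k * (k + 1) = (ε / 4) * (1 / 2) ^ k := by
        rw [hδdef]
        field_simp
      linarith [h3, hδk.symm.le]
    calc μ ((Ck k)ᶜ) ≤ μ {φ : DualBall E | 1 / (k + 1) ≤ f φ} := hmono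
      _ = ENNReal.ofReal (μ {φ : DualBall E | 1 / (k + 1) ≤ f φ}).toReal :=
          (ENNReal.ofReal_toReal hfin).symm
      _ ≤ ENNReal.ofReal ((ε / 4) * (1 / 2) ^ k) := ENNReal.ofReal_le_ofReal htr
  -- bound μ Cᶜ
  have hcompl : μ Cᶜ ≤ ENNReal.ofReal (ε / 2) := by
    have h1 : Cᶜ = ⋃ k, (Ck k)ᶜ := by
      rw [hC, Set.compl_iInter]
    rw [h1]
    calc μ (⋃ k, (Ck k)ᶜ) ≤ ∑' k, μ ((Ck k)ᶜ) := measure_iUnion_le _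
      _ ≤ ∑' k : ℕ, ENNReal.ofReal ((ε / 4) * (1 / 2) ^ k) :=
          ENNReal.tsum_le_tsum hmarkov
      _ = ∑' k : ℕ, ENNReal.ofReal (ε / 4) * (ENNReal.ofReal (1 / 2)) ^ k := by
          congr 1
          funext k
          rw [ENNReal.ofReal_mul (by positivity), ENNReal.ofReal_pow (by norm_num)]
      _ = ENNReal.ofReal (ε / 4) * ∑' k : ℕ, (ENNReal.ofReal (1 / 2)) ^ k :=
          ENNReal.tsum_mul_left
      _ = ENNReal.ofReal (ε / 4) * 2 := by
          rw [ENNReal.tsum_geometric]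
          congr 1
          rw [show ENNReal.ofReal (1 / 2) = 2⁻¹ by
            rw [ENNReal.ofReal_div_of_pos (by norm_num)]; norm_num]
          rw [show (1 : ℝ≥0∞) - 2⁻¹ = 2⁻¹ by
            rw [ENNReal.sub_eq_of_eq_add (by norm_num)]
            rw [ENNReal.inv_two_add_inv_two]]
          simp
      _ = ENNReal.ofReal (ε / 2) := by
          rw [← ENNReal.ofReal_ofNat 2, ← ENNReal.ofReal_mul (by positivity)]
          congr 1
          ring
  -- measure of C
  have hCmeas : MeasurableSet C := hCclosed.measurableSet
  have hsum : μ C + μ Cᶜ = 1 := by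
    rw [measure_add_measure_compl hCmeas, measure_univ]
  have hCfin : μ C ≠ ⊤ := measure_ne_top μ _
  have hCcfin : μ Cᶜ ≠ ⊤ := measure_ne_top μ _
  have hsumR : (μ C).toReal + (μ Cᶜ).toReal = 1 := by
    rw [← ENNReal.toReal_add hCfin hCcfin, hsum]
    simp
  have hcomplR : (μ Cᶜ).toReal ≤ ε / 2 :=
    ENNReal.toReal_le_of_le_ofReal (by positivity) hcompl
  refine ⟨C, hCclosed.isCompact, ?_, ?_, ?_⟩
  · -- norm one on C
    intro φ hφ
    refine le_antisymm φ.2 ?_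
    by_contra h
    push_neg at h
    obtain ⟨n, hn⟩ := exists_nat_one_div_lt (by linarith : (0:ℝ) < 1 - ‖WeakDual.toStrongDual φ.1‖)
    have hφn : 1 - 1 / (n + 1) ≤ (φ : DualBall E).1 (x n) := by
      have := Set.mem_iInter.mp hφ n
      simpa [hCk] using this
    have hb : (φ : DualBall E).1 (x n) ≤ ‖WeakDual.toStrongDual φ.1‖ := by
      have h1 : |(φ : DualBall E).1 (x n)| ≤ ‖WeakDual.toStrongDual φ.1‖ * ‖x n‖ := by
        simpa [Real.norm_eq_abs] using (WeakDual.toStrongDual φ.1).le_opNorm (x n)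
      calc (φ : DualBall E).1 (x n) ≤ |(φ : DualBall E).1 (x n)| := le_abs_self _
        _ ≤ ‖WeakDual.toStrongDual φ.1‖ * ‖x n‖ := h1
        _ ≤ ‖WeakDual.toStrongDual φ.1‖ * 1 :=
            mul_le_mul_of_nonneg_left (hx1 n) (norm_nonneg _)
        _ = ‖WeakDual.toStrongDual φ.1‖ := mul_one _
    linarith
  · -- convexity
    intro φ hφ ψ hψ ξ a b ha hb hab hξ
    rw [hC, Set.mem_iInter]
    intro k
    have hφk : 1 - 1 / (k + 1) ≤ (φ : DualBall E).1 (x k) := by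
      have := Set.mem_iInter.mp hφ k; simpa [hCk] using this
    have hψk : 1 - 1 / (k + 1) ≤ (ψ : DualBall E).1 (x k) := by
      have := Set.mem_iInter.mp hψ k; simpa [hCk] using this
    have hev : ξ.1 (x k) = a * (φ : DualBall E).1 (x k) + b * (ψ : DualBall E).1 (x k) := by
      have := congrArg (fun f : WeakDual ℝ E => f (x k)) hξ
      exact this
    simp only [hCk, Set.mem_setOf_eq, hev]
    calc (1:ℝ) - 1 / (k+1) = a * (1 - 1/(k+1)) + b * (1 - 1/(k+1)) := by
          rw [← add_mul, hab, one_mul]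
      _ ≤ a * (φ : DualBall E).1 (x k) + b * (ψ : DualBall E).1 (x k) :=
          add_le_add (mul_le_mul_of_nonneg_left hφk ha)
            (mul_le_mul_of_nonneg_left hψk hb)
  · -- measure bound
    linarith
end
end
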